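/- Let û minimize Φ(u) = Σ_i φ_i(u_i) over the monotone cone {u₁ ≤ ⋯ ≤ u_n}, where each φ_i is twice differentiable and strictly convex with φ_i'' > 0. Define d_i = φ_i''(û_i) > 0 and g(i) = û_i − φ_i'(û_i)/d_i, and let ξ(u) = Σ_{i=1}^n (u_i − g(i))² d_i. Then û also minimizes ξ over {u₁ ≤ ⋯ ≤ u_n}; i.e., û is the weighted isotonic regression of g with weights (d_i). -/

import Mathlib

/-- Self-induced characterization: the isotonic minimizer of a separable smooth strictly
convex objective is also the weighted isotonic regression of
g(i) = uhat i − φᵢ'(uhat i)/φᵢ''(uhat i) with weights dᵢ = φᵢ''(uhat i). -/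
theorem self_induced_characterization (n : ℕ) (φ φ' φ'' : ℕ → ℝ → ℝ)
    (hconv : ∀ i ∈ Finset.Icc 1 n, StrictConvexOn ℝ Set.univ (φ i))
    (hderiv : ∀ i ∈ Finset.Icc 1 n, ∀ x : ℝ, HasDerivAt (φ i) (φ' i x) x)
    (hderiv2 : ∀ i ∈ Finset.Icc 1 n, ∀ x : ℝ, HasDerivAt (φ' i) (φ'' i x) x)
    (hpos : ∀ i ∈ Finset.Icc 1 n, ∀ x : ℝ, 0 < φ'' i x)
    (uhat : ℕ → ℝ)
    (hmono : ∀ i j, i ∈ Finset.Icc 1 n → j ∈ Finset.Icc 1 n → i ≤ j → uhat i ≤ uhat j)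
    (hmin : IsMinOn (fun u : ℕ → ℝ => ∑ i ∈ Finset.Icc 1 n, φ i (u i))
        {u : ℕ → ℝ | ∀ i j, i ∈ Finset.Icc 1 n → j ∈ Finset.Icc 1 n → i ≤ j → u i ≤ u j}
        uhat) :
    IsMinOn (fun u : ℕ → ℝ => ∑ i ∈ Finset.Icc 1 n,
        (u i - (uhat i - φ' i (uhat i) / φ'' i (uhat i))) ^ 2 * φ'' i (uhat i))
        {u : ℕ → ℝ | ∀ i j, i ∈ Finset.Icc 1 n → j ∈ Finset.Icc 1 n → i ≤ j → u i ≤ u j}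
        uhat := by
  intro v hv
  simp only [Set.mem_setOf_eq] at hv
  -- Step 1: the directional derivative of Φ at uhat toward v is nonnegative
  set S := Finset.Icc 1 n with hS
  set L : ℝ := ∑ i ∈ S, φ' i (uhat i) * (v i - uhat i) with hL
  have hLnonneg : 0 ≤ L := by
    set h : ℝ → ℝ := fun t => ∑ i ∈ S, φ i (uhat i + t * (v i - uhat i)) with hh
    have hderivh : HasDerivAt h L 0 := by
      have := HasDerivAt.fun_sum (u := S)
        (A := fun i t => φ i (uhat i + t * (v i - uhat i)))
        (A' := fun i => φ' i (uhat i) * (v i - uhat i)) (x := (0:ℝ)) ?_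
      · exact this
      · intro i hi
        have h1 : HasDerivAt (fun t : ℝ => uhat i + t * (v i - uhat i))
            (v i - uhat i) 0 := by
          simpa using ((hasDerivAt_id (0:ℝ)).mul_const (v i - uhat i)).const_add (uhat i)
        have h2 := (hderiv i hi (uhat i + 0 * (v i - uhat i))).comp 0 h1
        simpa [Function.comp_def] using h2
    have hge : ∀ t ∈ Set.Ioc (0:ℝ) 1, 0 ≤ (h t - h 0) / t := by
      intro t ht
      have hmem : (fun j => uhat j + t * (v j - uhat j)) ∈
          {u : ℕ → ℝ | ∀ i j, i ∈ Finset.Icc 1 n → j ∈ Finset.Icc 1 n → i ≤ j → u i ≤ u j} := by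
        intro i j hi hj hij
        have h1 := hmono i j hi hj hij
        have h2 := hv i j hi hj hij
        show uhat i + t * (v i - uhat i) ≤ uhat j + t * (v j - uhat j)
        nlinarith [mul_le_mul_of_nonneg_left h2 ht.1.le,
          mul_le_mul_of_nonneg_left h1 (sub_nonneg.mpr ht.2)]
      have hmin' := hmin hmem
      have h0 : h 0 = ∑ i ∈ S, φ i (uhat i) := by
        simp [hh]
      have hge' : h 0 ≤ h t := by
        rw [h0]
        simpa using hmin'
      exact div_nonneg (by linarith) ht.1.le
    have htend : Filter.Tendsto (fun t => (h t - h 0) / t) (nhdsWithin 0 (Set.Ioi 0)) (nhds L) := by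
      have h1 := hasDerivAt_iff_tendsto_slope.mp hderivh
      have hsub : Set.Ioi (0:ℝ) ⊆ {(0:ℝ)}ᶜ := fun x hx => ne_of_gt hx
      have h2 := h1.mono_left (nhdsWithin_mono 0 hsub)
      have heq : ∀ t : ℝ, slope h 0 t = (h t - h 0) / t := by
        intro t; rw [slope_def_field, sub_zero]
      rwa [show slope h 0 = fun t => (h t - h 0) / t from funext heq] at h2
    refine ge_of_tendsto htend ?_
    filter_upwards [Ioc_mem_nhdsGT_of_mem (Set.left_mem_Ico.mpr one_pos)] with t ht
    exact hge t ht
  -- Step 2: expand ξ(v) - ξ(uhat)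
  rw [Set.mem_setOf_eq]
  show (∑ i ∈ S, (uhat i - (uhat i - φ' i (uhat i) / φ'' i (uhat i))) ^ 2 * φ'' i (uhat i))
      ≤ ∑ i ∈ S, (v i - (uhat i - φ' i (uhat i) / φ'' i (uhat i))) ^ 2 * φ'' i (uhat i)
  have key : ∀ i ∈ S,
      (uhat i - (uhat i - φ' i (uhat i) / φ'' i (uhat i))) ^ 2 * φ'' i (uhat i)
        + (v i - uhat i) ^ 2 * φ'' i (uhat i) + 2 * (φ' i (uhat i) * (v i - uhat i))
      = (v i - (uhat i - φ' i (uhat i) / φ'' i (uhat i))) ^ 2 * φ'' i (uhat i) := by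
    intro i hi
    have hd : φ'' i (uhat i) ≠ 0 := ne_of_gt (hpos i hi (uhat i))
    field_simp
    ring
  have hsum : ∑ i ∈ S, (v i - (uhat i - φ' i (uhat i) / φ'' i (uhat i))) ^ 2 * φ'' i (uhat i)
      = (∑ i ∈ S, (uhat i - (uhat i - φ' i (uhat i) / φ'' i (uhat i))) ^ 2 * φ'' i (uhat i))
        + (∑ i ∈ S, (v i - uhat i) ^ 2 * φ'' i (uhat i)) + 2 * L := by
    rw [hL, Finset.mul_sum, ← Finset.sum_add_distrib, ← Finset.sum_add_distrib]
    exact (Finset.sum_congr rfl key).symm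
  have hsq : 0 ≤ ∑ i ∈ S, (v i - uhat i) ^ 2 * φ'' i (uhat i) := by
    apply Finset.sum_nonneg
    intro i hi
    have := (hpos i hi (uhat i)).le
    positivity
  rw [hsum]
  linarith
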